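/- arXiv:2105.12033 — 4 statements merged into one kernel-verified Lean document; each statement's English description precedes it below -/
import Mathlib

section
/- Let α₁ > 0 and α₂ > 0. Define the naive purely data-driven DNN training loss L(W, b) = (1/2)·‖P − (W·Y + b·𝟙ᵀ)‖² + (α₁/2)·‖W‖² + (α₂/2)·‖b‖² for W ∈ ℝ^{m×n} and b ∈ ℝ^m. Let M = I_{nt} − (1/(nt + α₂))·𝟙·𝟙ᵀ ∈ ℝ^{nt×nt}. Then the matrix Y·M·Yᵀ + α₁·I_n is invertible, and the pair W⁰ = P·M·Yᵀ·(Y·M·Yᵀ + α₁·I_n)⁻¹, b⁰ = (1/(1 + α₂/nt))·(ū − W⁰·ȳ) is the unique global minimizer of L. -/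
open Matrix

/-- Squared Frobenius norm of a real matrix: `‖X‖² = tr(Xᵀ X)`. -/
noncomputable def frobSq {k l : ℕ} (X : Matrix (Fin k) (Fin l) ℝ) : ℝ :=
  Matrix.trace (Xᵀ * X)

lemma frobSq_eq {k l : ℕ} (X : Matrix (Fin k) (Fin l) ℝ) :
    frobSq X = ∑ i, ∑ j, X i j ^ 2 := by
  unfold frobSq
  simp only [Matrix.trace, Matrix.diag_apply, Matrix.mul_apply, Matrix.transpose_apply, sq]
  exact Finset.sum_comm

lemma sq_sum_expand {k l : ℕ} (X Z : Matrix (Fin k) (Fin l) ℝ) :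
    (∑ i, ∑ j, (X i j + Z i j) ^ 2) =
      (∑ i, ∑ j, X i j ^ 2) + 2 * (∑ i, ∑ j, X i j * Z i j) + ∑ i, ∑ j, Z i j ^ 2 := by
  have h1 : ∀ i : Fin k, (∑ j, (X i j + Z i j) ^ 2) =
      (∑ j, X i j ^ 2) + 2 * (∑ j, X i j * Z i j) + ∑ j, Z i j ^ 2 := by
    intro i
    rw [Finset.mul_sum, ← Finset.sum_add_distrib, ← Finset.sum_add_distrib]
    exact Finset.sum_congr rfl fun j _ => by ring
  rw [Finset.sum_congr rfl fun i _ => h1 i, Finset.mul_sum,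
    ← Finset.sum_add_distrib, ← Finset.sum_add_distrib]

lemma sq_sum_expand_sub {k l : ℕ} (X Z : Matrix (Fin k) (Fin l) ℝ) :
    (∑ i, ∑ j, (X i j - Z i j) ^ 2) =
      (∑ i, ∑ j, X i j ^ 2) - 2 * (∑ i, ∑ j, X i j * Z i j) + ∑ i, ∑ j, Z i j ^ 2 := by
  have h1 : ∀ i : Fin k, (∑ j, (X i j - Z i j) ^ 2) =
      (∑ j, X i j ^ 2) - 2 * (∑ j, X i j * Z i j) + ∑ j, Z i j ^ 2 := by
    intro i
    rw [Finset.mul_sum, ← Finset.sum_sub_distrib, ← Finset.sum_add_distrib]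
    exact Finset.sum_congr rfl fun j _ => by ring
  rw [Finset.sum_congr rfl fun i _ => h1 i, Finset.mul_sum,
    ← Finset.sum_sub_distrib, ← Finset.sum_add_distrib]

lemma sq_sum_expand_vec {k : ℕ} (x z : Fin k → ℝ) :
    (∑ i, (x i + z i) ^ 2) =
      (∑ i, x i ^ 2) + 2 * (∑ i, x i * z i) + ∑ i, z i ^ 2 := by
  rw [Finset.mul_sum, ← Finset.sum_add_distrib, ← Finset.sum_add_distrib]
  exact Finset.sum_congr rfl fun j _ => by ring

lemma sq_sum_pos {k l : ℕ} {X : Matrix (Fin k) (Fin l) ℝ} (hX : X ≠ 0) :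
    0 < ∑ i, ∑ j, X i j ^ 2 := by
  obtain ⟨i, j, hij⟩ : ∃ i j, X i j ≠ 0 := by
    by_contra h
    push_neg at h
    exact hX (by ext i j; simpa using h i j)
  have h1 : 0 < ∑ j, X i j ^ 2 := by
    have := Finset.single_le_sum (f := fun j => X i j ^ 2)
      (fun j _ => sq_nonneg _) (Finset.mem_univ j)
    have h2 : 0 < X i j ^ 2 := pow_pos (abs_pos.mpr hij) 2 |>.trans_eq (by rw [sq_abs])
    linarith
  have := Finset.single_le_sum (f := fun i => ∑ j, X i j ^ 2)
    (fun i _ => Finset.sum_nonneg fun j _ => sq_nonneg _) (Finset.mem_univ i)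
  linarith

lemma sq_sum_vec_pos {k : ℕ} {x : Fin k → ℝ} (hx : x ≠ 0) :
    0 < ∑ i, x i ^ 2 := by
  obtain ⟨i, hi⟩ : ∃ i, x i ≠ 0 := by
    by_contra h
    push_neg at h
    exact hx (funext fun i => h i)
  have h2 : 0 < x i ^ 2 := pow_pos (abs_pos.mpr hi) 2 |>.trans_eq (by rw [sq_abs])
  have := Finset.single_le_sum (f := fun i => x i ^ 2)
    (fun i _ => sq_nonneg _) (Finset.mem_univ i)
  linarith

lemma isUnit_aux {n nt : ℕ} (Y : Matrix (Fin n) (Fin nt) ℝ) (α₁ α₂ : ℝ)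
    (hα₁ : 0 < α₁) (hα₂ : 0 < α₂)
    (M : Matrix (Fin nt) (Fin nt) ℝ)
    (hM : M = 1 - ((nt : ℝ) + α₂)⁻¹ • vecMulVec 1 1) :
    IsUnit (Y * M * Yᵀ + α₁ • (1 : Matrix (Fin n) (Fin n) ℝ)) := by
  have hcpos : (0:ℝ) < (nt : ℝ) + α₂ := by positivity
  have hMsym : Mᵀ = M := by
    rw [hM]; ext i j
    simp [Matrix.transpose_apply, Matrix.one_apply, vecMulVec]
    by_cases h : i = j <;> simp [h, Matrix.one_apply, eq_comm]
  have hMq : ∀ y : Fin nt → ℝ, 0 ≤ y ⬝ᵥ (M *ᵥ y) := by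
    intro y
    have hMy : M *ᵥ y = y - ((nt : ℝ) + α₂)⁻¹ • ((∑ j, y j) • (1 : Fin nt → ℝ)) := by
      rw [hM, Matrix.sub_mulVec, Matrix.one_mulVec, Matrix.smul_mulVec]
      congr 1
      ext i
      simp [vecMulVec, Matrix.mulVec, dotProduct]
    rw [hMy]
    have hdot : y ⬝ᵥ (y - ((nt : ℝ) + α₂)⁻¹ • ((∑ j, y j) • (1 : Fin nt → ℝ)))
        = (∑ j, y j ^ 2) - ((nt : ℝ) + α₂)⁻¹ * ((∑ j, y j) * (∑ j, y j)) := by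
      simp only [dotProduct, Pi.sub_apply, Pi.smul_apply, Pi.one_apply, smul_eq_mul,
        mul_one, mul_sub, Finset.sum_sub_distrib]
      rw [← Finset.sum_mul]
      ring_nf
    rw [hdot]
    have hcs : (∑ j, y j) ^ 2 ≤ (∑ j, y j ^ 2) * (nt : ℝ) := by
      have := Finset.sum_mul_sq_le_sq_mul_sq Finset.univ y (fun _ => (1:ℝ))
      simpa using this
    have hS : 0 ≤ ∑ j, y j ^ 2 := Finset.sum_nonneg fun j _ => sq_nonneg _
    rw [sub_nonneg]
    rw [inv_mul_le_iff₀ hcpos, ← sq]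
    nlinarith
  have hpd : Matrix.PosDef (Y * M * Yᵀ + α₁ • (1 : Matrix (Fin n) (Fin n) ℝ)) := by
    rw [Matrix.posDef_iff_dotProduct_mulVec]
    constructor
    · unfold Matrix.IsHermitian
      rw [conjTranspose_add, conjTranspose_smul]
      have : (Y * M * Yᵀ)ᴴ = Y * M * Yᵀ := by
        rw [show (Y * M * Yᵀ)ᴴ = (Y * M * Yᵀ)ᵀ from rfl, Matrix.transpose_mul,
          Matrix.transpose_mul, Matrix.transpose_transpose, hMsym, Matrix.mul_assoc]
      rw [this]
      simp
    · intro x hx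
      have hsx : star x = x := by simp
      rw [hsx, Matrix.add_mulVec, dotProduct_add, Matrix.smul_mulVec,
        Matrix.one_mulVec, dotProduct_smul]
      have h1 : x ⬝ᵥ ((Y * M * Yᵀ) *ᵥ x) = (Yᵀ *ᵥ x) ⬝ᵥ (M *ᵥ (Yᵀ *ᵥ x)) := by
        rw [← Matrix.mulVec_mulVec, ← Matrix.mulVec_mulVec, Matrix.dotProduct_mulVec x Y,
          ← Matrix.mulVec_transpose, Matrix.dotProduct_mulVec, Matrix.dotProduct_mulVec]
      have h2 : (0:ℝ) < x ⬝ᵥ x := by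
        have hnn : 0 ≤ x ⬝ᵥ x := Finset.sum_nonneg fun i _ => mul_self_nonneg _
        have hne : x ⬝ᵥ x ≠ 0 := fun h => hx ((dotProduct_self_eq_zero).mp h)
        exact lt_of_le_of_ne hnn (Ne.symm hne)
      rw [h1, smul_eq_mul]
      have := hMq (Yᵀ *ᵥ x)
      nlinarith [mul_pos hα₁ h2]
  exact hpd.isUnit

set_option maxHeartbeats 1600000 in
/-- The pair `(W⁰, b⁰)` is the unique global minimizer of the naive
purely data-driven DNN training loss, and `Y M Yᵀ + α₁ I` is invertible. -/
theorem nDNN_unique_global_minimizer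
    {m n nt : ℕ} (hm : 0 < m) (hn : 0 < n) (hnt : 0 < nt)
    (P : Matrix (Fin m) (Fin nt) ℝ) (Y : Matrix (Fin n) (Fin nt) ℝ)
    (α₁ α₂ : ℝ) (hα₁ : 0 < α₁) (hα₂ : 0 < α₂)
    (L : Matrix (Fin m) (Fin n) ℝ → (Fin m → ℝ) → ℝ)
    (hL : ∀ W b, L W b =
      (1 / 2) * frobSq (P - (W * Y + vecMulVec b 1)) +
      (α₁ / 2) * frobSq W + (α₂ / 2) * ∑ i, (b i) ^ 2)
    (M : Matrix (Fin nt) (Fin nt) ℝ)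
    (hM : M = 1 - ((nt : ℝ) + α₂)⁻¹ • vecMulVec 1 1)
    (ubar : Fin m → ℝ) (hubar : ubar = (nt : ℝ)⁻¹ • (P *ᵥ 1))
    (ybar : Fin n → ℝ) (hybar : ybar = (nt : ℝ)⁻¹ • (Y *ᵥ 1))
    (W0 : Matrix (Fin m) (Fin n) ℝ)
    (hW0 : W0 = P * M * Yᵀ * (Y * M * Yᵀ + α₁ • 1)⁻¹)
    (b0 : Fin m → ℝ)
    (hb0 : b0 = (1 + α₂ / (nt : ℝ))⁻¹ • (ubar - W0 *ᵥ ybar)) :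
    IsUnit (Y * M * Yᵀ + α₁ • (1 : Matrix (Fin n) (Fin n) ℝ)) ∧
    ∀ W b, (W, b) ≠ (W0, b0) → L W0 b0 < L W b := by
  have hU : IsUnit (Y * M * Yᵀ + α₁ • (1 : Matrix (Fin n) (Fin n) ℝ)) :=
    isUnit_aux Y α₁ α₂ hα₁ hα₂ M hM
  refine ⟨hU, ?_⟩
  have hnt0 : (nt : ℝ) ≠ 0 := Nat.cast_ne_zero.mpr hnt.ne'
  have hcpos : (0:ℝ) < (nt : ℝ) + α₂ := by positivity
  have hc0 : ((nt : ℝ) + α₂) ≠ 0 := hcpos.ne'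
  -- W0 * A = P * M * Yᵀ
  have hWA : W0 * (Y * M * Yᵀ + α₁ • (1 : Matrix (Fin n) (Fin n) ℝ)) = P * M * Yᵀ := by
    rw [hW0, Matrix.mul_assoc,
      Matrix.nonsing_inv_mul _ ((Matrix.isUnit_iff_isUnit_det _).mp hU), Matrix.mul_one]
  have hWA' : W0 * (Y * M * Yᵀ) + α₁ • W0 = P * M * Yᵀ := by
    rw [← hWA, Matrix.mul_add, Matrix.mul_smul, Matrix.mul_one]
  -- expansion of B * M * Yᵀ
  have hMexp : ∀ {a : ℕ} (B : Matrix (Fin a) (Fin nt) ℝ),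
      B * M * Yᵀ = B * Yᵀ - ((nt:ℝ)+α₂)⁻¹ • (B * (vecMulVec 1 1 : Matrix (Fin nt) (Fin nt) ℝ) * Yᵀ) := by
    intro a B
    rw [hM, Matrix.mul_sub, Matrix.mul_one, Matrix.mul_smul, Matrix.sub_mul, Matrix.smul_mul]
  have entry_J : ∀ {a : ℕ} (B : Matrix (Fin a) (Fin nt) ℝ) (i : Fin a) (k : Fin n),
      (B * (vecMulVec 1 1 : Matrix (Fin nt) (Fin nt) ℝ) * Yᵀ) i k
        = (∑ j, B i j) * (∑ j, Y k j) := by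
    intro a B i k
    simp only [Matrix.mul_apply, vecMulVec_apply, Matrix.transpose_apply, Pi.one_apply,
      mul_one]
    rw [Finset.mul_sum]
  -- entrywise stationarity derived from hWA'
  have hstatE : ∀ (i : Fin m) (k : Fin n),
      (P * Yᵀ) i k - ((nt:ℝ)+α₂)⁻¹ * ((∑ j, P i j) * (∑ j, Y k j)) =
      ((W0 * Y) * Yᵀ) i k - ((nt:ℝ)+α₂)⁻¹ * ((∑ j, (W0 * Y) i j) * (∑ j, Y k j))
        + α₁ * W0 i k := by
    intro i k
    have h1 : W0 * (Y * M * Yᵀ) = (W0 * Y) * Yᵀ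
        - ((nt:ℝ)+α₂)⁻¹ • ((W0 * Y) * (vecMulVec 1 1 : Matrix (Fin nt) (Fin nt) ℝ) * Yᵀ) := by
      rw [← Matrix.mul_assoc, ← Matrix.mul_assoc, hMexp (W0 * Y)]
    have h := congrFun (congrFun hWA' i) k
    rw [hMexp P, h1] at h
    simp only [Matrix.add_apply, Matrix.sub_apply, Matrix.smul_apply, smul_eq_mul,
      entry_J] at h
    linarith
  -- entrywise formula for b0
  have hb0c : ∀ i : Fin m,
      b0 i = ((nt:ℝ)+α₂)⁻¹ * ((∑ j, P i j) - ∑ j, (W0 * Y) i j) := by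
    intro i
    have h := congrFun hb0 i
    have hu : ubar i = (nt : ℝ)⁻¹ * ∑ j, P i j := by
      rw [hubar]; simp [Matrix.mulVec, dotProduct]
    have hy : (W0 *ᵥ ybar) i = (nt : ℝ)⁻¹ * ∑ j, (W0 * Y) i j := by
      rw [hybar]
      simp only [Matrix.mulVec, dotProduct, Pi.smul_apply, smul_eq_mul,
        Matrix.mul_apply, Pi.one_apply, mul_one, Finset.mul_sum]
      rw [Finset.sum_comm]
      exact Finset.sum_congr rfl fun k _ => Finset.sum_congr rfl fun j _ => by ring
    simp only [Pi.smul_apply, Pi.sub_apply, smul_eq_mul] at h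
    rw [hu, hy] at h
    rw [h]
    have h3 : (1 + α₂ / (nt:ℝ)) ≠ 0 := by
      have : (0:ℝ) < 1 + α₂ / nt := by positivity
      exact this.ne'
    field_simp
  -- the residual E
  set E : Matrix (Fin m) (Fin nt) ℝ := P - (W0 * Y + vecMulVec b0 1) with hE
  -- stationarity conditions
  have hS1 : ∀ i : Fin m, (∑ j, E i j) = α₂ * b0 i := by
    intro i
    have hsum : (∑ j, E i j) =
        (∑ j, P i j) - (∑ j, (W0 * Y) i j) - (nt:ℝ) * b0 i := by
      simp only [hE, Matrix.sub_apply, Matrix.add_apply, vecMulVec_apply, Pi.one_apply,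
        mul_one, Finset.sum_sub_distrib, Finset.sum_add_distrib, Finset.sum_const,
        Finset.card_univ, Fintype.card_fin, nsmul_eq_mul]
      ring
    rw [hsum, hb0c i]
    field_simp
    ring
  have hS2 : ∀ (i : Fin m) (k : Fin n), (∑ j, E i j * Y k j) = α₁ * W0 i k := by
    intro i k
    have hsum : (∑ j, E i j * Y k j) =
        (P * Yᵀ) i k - ((W0 * Y) * Yᵀ) i k - b0 i * (∑ j, Y k j) := by
      simp only [hE, Matrix.sub_apply, Matrix.add_apply, vecMulVec_apply, Pi.one_apply,
        mul_one, Matrix.mul_apply, Matrix.transpose_apply]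
      rw [← Finset.sum_sub_distrib, Finset.mul_sum, ← Finset.sum_sub_distrib]
      exact Finset.sum_congr rfl fun j _ => by ring
    rw [hsum, hb0c i]
    linear_combination hstatE i k
  -- main estimate
  intro W b hne
  set DW : Matrix (Fin m) (Fin n) ℝ := W - W0 with hDW
  set Db : Fin m → ℝ := b - b0 with hDb
  set D : Matrix (Fin m) (Fin nt) ℝ := DW * Y + vecMulVec Db 1 with hD
  have hPD : P - (W * Y + vecMulVec b 1) = E - D := by
    have h1 : DW * Y = W * Y - W0 * Y := Matrix.sub_mul _ _ _
    have h2 : vecMulVec Db (1 : Fin nt → ℝ) = vecMulVec b 1 - vecMulVec b0 1 := by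
      ext i j; simp [vecMulVec, hDb]
    rw [hD, h1, h2, hE]
    ext i j
    simp only [Matrix.sub_apply, Matrix.add_apply]
    ring
  -- cross term
  have hcross : (∑ i, ∑ j, E i j * D i j) =
      α₁ * (∑ i, ∑ k, W0 i k * DW i k) + α₂ * (∑ i, b0 i * Db i) := by
    have hrow : ∀ i : Fin m, (∑ j, E i j * D i j) =
        (∑ k, W0 i k * DW i k) * α₁ + α₂ * (b0 i * Db i) := by
      intro i
      have hDapp : ∀ j, D i j = (∑ k, DW i k * Y k j) + Db i := by
        intro j
        simp [hD, Matrix.add_apply, Matrix.mul_apply, vecMulVec_apply]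
      calc (∑ j, E i j * D i j)
          = (∑ j, ((∑ k, E i j * (DW i k * Y k j)) + E i j * Db i)) := by
            refine Finset.sum_congr rfl fun j _ => ?_
            rw [hDapp j, mul_add, Finset.mul_sum]
        _ = (∑ j, ∑ k, E i j * (DW i k * Y k j)) + (∑ j, E i j) * Db i := by
            rw [Finset.sum_add_distrib, Finset.sum_mul]
        _ = (∑ k, DW i k * (∑ j, E i j * Y k j)) + (∑ j, E i j) * Db i := by
            rw [Finset.sum_comm]
            congr 1
            refine Finset.sum_congr rfl fun k _ => ?_
            rw [Finset.mul_sum]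
            exact Finset.sum_congr rfl fun j _ => by ring
        _ = (∑ k, W0 i k * DW i k) * α₁ + α₂ * (b0 i * Db i) := by
            rw [hS1 i, Finset.sum_congr rfl fun k _ => by rw [hS2 i k], Finset.sum_mul]
            rw [Finset.sum_congr rfl (fun k (_ : k ∈ Finset.univ) =>
              (by ring : DW i k * (α₁ * W0 i k) = W0 i k * DW i k * α₁))]
            ring
    rw [Finset.sum_congr rfl fun i _ => hrow i, Finset.sum_add_distrib,
      ← Finset.sum_mul, ← Finset.mul_sum]
    ring
  -- decompositions of the loss pieces
  have hWdec : W = W0 + DW := by rw [hDW]; abel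
  have hbdec : b = b0 + Db := by rw [hDb]; abel
  have hfs1 : frobSq (P - (W * Y + vecMulVec b 1)) =
      (∑ i, ∑ j, E i j ^ 2) - 2 * (∑ i, ∑ j, E i j * D i j) + (∑ i, ∑ j, D i j ^ 2) := by
    rw [hPD, frobSq_eq]
    exact sq_sum_expand_sub E D
  have hfs2 : frobSq W =
      (∑ i, ∑ k, W0 i k ^ 2) + 2 * (∑ i, ∑ k, W0 i k * DW i k) + (∑ i, ∑ k, DW i k ^ 2) := by
    conv_lhs => rw [hWdec]
    rw [frobSq_eq]
    exact sq_sum_expand W0 DW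
  have hfs3 : (∑ i, b i ^ 2) =
      (∑ i, b0 i ^ 2) + 2 * (∑ i, b0 i * Db i) + (∑ i, Db i ^ 2) := by
    conv_lhs => rw [hbdec]
    exact sq_sum_expand_vec b0 Db
  have hfs0 : frobSq (P - (W0 * Y + vecMulVec b0 1)) = (∑ i, ∑ j, E i j ^ 2) := by
    rw [← hE, frobSq_eq]
  have hdiff : L W b = L W0 b0 + (1/2) * (∑ i, ∑ j, D i j ^ 2)
      + (α₁/2) * (∑ i, ∑ k, DW i k ^ 2) + (α₂/2) * (∑ i, Db i ^ 2) := by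
    rw [hL W b, hL W0 b0, hfs1, hfs2, hfs3, hfs0, frobSq_eq W0]
    linear_combination -hcross
  -- positivity
  have hDpos : 0 ≤ ∑ i, ∑ j, D i j ^ 2 :=
    Finset.sum_nonneg fun i _ => Finset.sum_nonneg fun j _ => sq_nonneg _
  have hDWnn : 0 ≤ ∑ i, ∑ k, DW i k ^ 2 :=
    Finset.sum_nonneg fun i _ => Finset.sum_nonneg fun j _ => sq_nonneg _
  have hDbnn : 0 ≤ ∑ i, Db i ^ 2 := Finset.sum_nonneg fun i _ => sq_nonneg _
  have hne' : DW ≠ 0 ∨ Db ≠ 0 := by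
    by_contra h
    push_neg at h
    obtain ⟨h1, h2⟩ := h
    apply hne
    have hW' : W = W0 := by rw [hWdec, h1, add_zero]
    have hb' : b = b0 := by rw [hbdec, h2, add_zero]
    rw [hW', hb']
  have hg1 : 0 ≤ (1/2 : ℝ) * (∑ i, ∑ j, D i j ^ 2) := by linarith
  rw [hdiff]
  rcases hne' with h | h
  · have h1 := sq_sum_pos h
    have h2 : 0 < (α₁/2) * (∑ i, ∑ k, DW i k ^ 2) := by
      apply mul_pos (by linarith) h1
    have h3 : 0 ≤ (α₂/2) * (∑ i, Db i ^ 2) := by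
      apply mul_nonneg (by linarith) hDbnn
    linarith
  · have h1 := sq_sum_vec_pos h
    have h2 : 0 ≤ (α₁/2) * (∑ i, ∑ k, DW i k ^ 2) := by
      apply mul_nonneg (by linarith) hDWnn
    have h3 : 0 < (α₂/2) * (∑ i, Db i ^ 2) := by
      apply mul_pos (by linarith) h1
    linarith
end

section
/- Let Γ ∈ ℝ^{m×m} and Λ ∈ ℝ^{n×n} be symmetric positive definite, α ≥ 0, and define the model-constrained DNN training loss L(W, b) = (1/2)·‖P − (W·Y + b·𝟙ᵀ)‖²_{Γ⁻¹} + (α/2)·‖Y − G·(W·Y + b·𝟙ᵀ)‖²_{Λ⁻¹} for W ∈ ℝ^{m×n}, b ∈ ℝ^m. Let A = Γ⁻¹ + α·Gᵀ·Λ⁻¹·G (which is invertible), and let Yd ∈ ℝ^{nt×n} be a Moore–Penrose pseudoinverse of Ȳ. Then the pair Wᴵ = A⁻¹·(Γ⁻¹·P̄·Yd + α·Gᵀ·Λ⁻¹·Ȳ·Yd), bᴵ = A⁻¹·(Γ⁻¹·ū + α·Gᵀ·Λ⁻¹·ȳ − (Γ⁻¹·P̄·Yd + α·Gᵀ·Λ⁻¹·Ȳ·Yd)·ȳ)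 is a global minimizer of L. -/
open Matrix

/-- Weighted squared norm of a matrix: `‖X‖²_A = tr(Xᵀ A X)`. -/
noncomputable def wnormSq {k l : ℕ} (A : Matrix (Fin k) (Fin k) ℝ)
    (X : Matrix (Fin k) (Fin l) ℝ) : ℝ :=
  Matrix.trace (Xᵀ * A * X)

section McAux
variable {k l p : ℕ}

lemma mul_vecMulVec' (X : Matrix (Fin k) (Fin l) ℝ) (u : Fin l → ℝ) (v : Fin p → ℝ) :
    X * vecMulVec u v = vecMulVec (X *ᵥ u) v := by
  ext i j
  simp [Matrix.mul_apply, vecMulVec_apply, mulVec, dotProduct, Finset.sum_mul, mul_assoc]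

lemma vecMulVec_mulVec' (u : Fin k → ℝ) (v : Fin l → ℝ) (w : Fin l → ℝ) :
    vecMulVec u v *ᵥ w = (v ⬝ᵥ w) • u := by
  ext i
  simp [mulVec, vecMulVec_apply, dotProduct, Finset.mul_sum, mul_assoc, mul_comm, mul_left_comm]

lemma transpose_vecMulVec' (u : Fin k → ℝ) (v : Fin l → ℝ) :
    (vecMulVec u v)ᵀ = vecMulVec v u := by
  ext i j; simp [vecMulVec_apply, mul_comm]

lemma vecMulVec_add_left' (u w : Fin k → ℝ) (v : Fin l → ℝ) :
    vecMulVec (u + w) v = vecMulVec u v + vecMulVec w v := by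
  ext i j; simp [vecMulVec_apply, add_mul]

lemma vecMulVec_sub_left' (u w : Fin k → ℝ) (v : Fin l → ℝ) :
    vecMulVec (u - w) v = vecMulVec u v - vecMulVec w v := by
  ext i j; simp [vecMulVec_apply, sub_mul]

lemma vecMulVec_smul_left' (a : ℝ) (u : Fin k → ℝ) (v : Fin l → ℝ) :
    vecMulVec (a • u) v = a • vecMulVec u v := by
  ext i j; simp [vecMulVec_apply, mul_assoc]

lemma vecMulVec_zero_left' (v : Fin l → ℝ) :
    vecMulVec (0 : Fin k → ℝ) v = 0 := by
  ext i j; simp [vecMulVec_apply]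

lemma trace_transpose_mul_mul_nonneg {A : Matrix (Fin k) (Fin k) ℝ}
    (hA : A.PosSemidef) (V : Matrix (Fin k) (Fin l) ℝ) :
    0 ≤ Matrix.trace (Vᵀ * A * V) := by
  rw [Matrix.trace]
  apply Finset.sum_nonneg
  intro j _
  have h := hA.dotProduct_mulVec_nonneg (fun i => V i j)
  have key : (Vᵀ * A * V) j j = (fun i => V i j) ⬝ᵥ (A *ᵥ fun i => V i j) := by
    simp only [Matrix.mul_apply, Matrix.transpose_apply, dotProduct, mulVec,
      Finset.sum_mul, Finset.mul_sum, mul_assoc]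
    rw [Finset.sum_comm]
  simpa [Matrix.diag, key] using h

lemma wnormSq_sub_expand {A : Matrix (Fin k) (Fin k) ℝ} (hA : Aᵀ = A)
    (X V : Matrix (Fin k) (Fin l) ℝ) :
    wnormSq A (X - V) =
      wnormSq A X - 2 * Matrix.trace (Vᵀ * A * X) + wnormSq A V := by
  have hsym : Matrix.trace (Xᵀ * A * V) = Matrix.trace (Vᵀ * A * X) := by
    rw [← Matrix.trace_transpose (Xᵀ * A * V)]
    simp [Matrix.transpose_mul, hA, Matrix.mul_assoc]
  simp only [wnormSq, Matrix.transpose_sub, Matrix.sub_mul, Matrix.mul_sub,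
    Matrix.trace_sub]
  rw [hsym]; ring

end McAux

set_option maxHeartbeats 1000000

/-- The pair `(Wᴵ, bᴵ)` is a global minimizer of the model-constrained DNN
training loss for a linear forward map and a linear one-layer network. -/
theorem mcDNN_global_minimizer
    {m n nt : ℕ} (hm : 0 < m) (hn : 0 < n) (hnt : 0 < nt)
    (P : Matrix (Fin m) (Fin nt) ℝ) (Y : Matrix (Fin n) (Fin nt) ℝ)
    (G : Matrix (Fin n) (Fin m) ℝ)
    (Gam : Matrix (Fin m) (Fin m) ℝ) (Lam : Matrix (Fin n) (Fin n) ℝ)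
    (hGam : Gam.PosDef) (hLam : Lam.PosDef)
    (α : ℝ) (hα : 0 ≤ α)
    (L : Matrix (Fin m) (Fin n) ℝ → (Fin m → ℝ) → ℝ)
    (hL : ∀ W b, L W b =
      (1 / 2) * wnormSq Gam⁻¹ (P - (W * Y + vecMulVec b 1)) +
      (α / 2) * wnormSq Lam⁻¹ (Y - G * (W * Y + vecMulVec b 1)))
    (ubar : Fin m → ℝ) (hubar : ubar = (nt : ℝ)⁻¹ • (P *ᵥ 1))
    (ybar : Fin n → ℝ) (hybar : ybar = (nt : ℝ)⁻¹ • (Y *ᵥ 1))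
    (Pbar : Matrix (Fin m) (Fin nt) ℝ) (hPbar : Pbar = P - vecMulVec ubar 1)
    (Ybar : Matrix (Fin n) (Fin nt) ℝ) (hYbar : Ybar = Y - vecMulVec ybar 1)
    (Yd : Matrix (Fin nt) (Fin n) ℝ)
    (hYd1 : Ybar * Yd * Ybar = Ybar) (hYd2 : Yd * Ybar * Yd = Yd)
    (hYd3 : (Ybar * Yd)ᵀ = Ybar * Yd) (hYd4 : (Yd * Ybar)ᵀ = Yd * Ybar)
    (A : Matrix (Fin m) (Fin m) ℝ) (hA : A = Gam⁻¹ + α • (Gᵀ * Lam⁻¹ * G))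
    (WI : Matrix (Fin m) (Fin n) ℝ)
    (hWI : WI = A⁻¹ * (Gam⁻¹ * Pbar * Yd + α • (Gᵀ * Lam⁻¹ * Ybar * Yd)))
    (bI : Fin m → ℝ)
    (hbI : bI = A⁻¹ *ᵥ (Gam⁻¹ *ᵥ ubar + α • ((Gᵀ * Lam⁻¹) *ᵥ ybar)
      - (Gam⁻¹ * Pbar * Yd + α • (Gᵀ * Lam⁻¹ * Ybar * Yd)) *ᵥ ybar)) :
    ∀ W b, L WI bI ≤ L W b := by
  have hntR : (nt : ℝ) ≠ 0 := Nat.cast_ne_zero.mpr hnt.ne'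
  -- positive definiteness facts
  have hGi : (Gam⁻¹).PosDef := hGam.inv
  have hLi : (Lam⁻¹).PosDef := hLam.inv
  have hGiT : (Gam⁻¹)ᵀ = Gam⁻¹ := by
    have := hGi.isHermitian
    rwa [Matrix.IsHermitian, conjTranspose_eq_transpose_of_trivial] at this
  have hLiT : (Lam⁻¹)ᵀ = Lam⁻¹ := by
    have := hLi.isHermitian
    rwa [Matrix.IsHermitian, conjTranspose_eq_transpose_of_trivial] at this
  have hGLG : (Gᵀ * Lam⁻¹ * G).PosSemidef := by
    have := hLi.posSemidef.conjTranspose_mul_mul_same G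
    rwa [conjTranspose_eq_transpose_of_trivial] at this
  have hGLGs : (α • (Gᵀ * Lam⁻¹ * G)).PosSemidef := by
    refine Matrix.PosSemidef.of_dotProduct_mulVec_nonneg ?_ (fun x => ?_)
    · have := hGLG.isHermitian
      rw [Matrix.IsHermitian] at this ⊢
      rw [Matrix.conjTranspose_smul, this]
      simp
    · have := hGLG.dotProduct_mulVec_nonneg x
      rw [Matrix.smul_mulVec, dotProduct_smul]
      exact mul_nonneg hα this
  have hApd : A.PosDef := by
    rw [hA]; exact hGi.add_posSemidef hGLGs
  have hAAinv : A * A⁻¹ = 1 :=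
    Matrix.mul_nonsing_inv A (Matrix.isUnit_iff_isUnit_det A |>.1 hApd.isUnit)
  -- abbreviations
  set M := Gam⁻¹ * Pbar * Yd + α • (Gᵀ * Lam⁻¹ * Ybar * Yd) with hM
  set U := WI * Y + vecMulVec bI 1 with hU
  have hAW : A * WI = M := by
    rw [hWI, ← Matrix.mul_assoc, hAAinv, Matrix.one_mul]
  have hAb : A *ᵥ bI =
      Gam⁻¹ *ᵥ ubar + α • ((Gᵀ * Lam⁻¹) *ᵥ ybar) - M *ᵥ ybar := by
    rw [hbI, Matrix.mulVec_mulVec, hAAinv, Matrix.one_mulVec]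
  -- centered matrices kill the ones vector
  have hone : (1 : Fin nt → ℝ) ⬝ᵥ (1 : Fin nt → ℝ) = (nt : ℝ) := by
    simp [dotProduct]
  have hP1 : Pbar *ᵥ 1 = 0 := by
    rw [hPbar, Matrix.sub_mulVec, vecMulVec_mulVec', hone, hubar, smul_smul,
      mul_inv_cancel₀ hntR, one_smul, sub_self]
  have hY1 : Ybar *ᵥ 1 = 0 := by
    rw [hYbar, Matrix.sub_mulVec, vecMulVec_mulVec', hone, hybar, smul_smul,
      mul_inv_cancel₀ hntR, one_smul, sub_self]
  -- the residual "gradient" matrix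
  set R0 := Gam⁻¹ * (P - U) + α • (Gᵀ * Lam⁻¹ * (Y - G * U)) with hR0def
  have hR0 : R0 = Gam⁻¹ * (Pbar - Pbar * (Yd * Ybar)) := by
    have hAU : A * U = M * Y + vecMulVec (A *ᵥ bI) 1 := by
      rw [hU, Matrix.mul_add, ← Matrix.mul_assoc, hAW, mul_vecMulVec']
    have step1 : R0 = Gam⁻¹ * P + α • (Gᵀ * Lam⁻¹ * Y) - A * U := by
      rw [hR0def, hA, Matrix.add_mul, Matrix.mul_sub, Matrix.mul_sub,
        Matrix.smul_mul, Matrix.mul_assoc (Gᵀ * Lam⁻¹) G U]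
      module
    have step2 : M * Ybar = Gam⁻¹ * (Pbar * (Yd * Ybar)) + α • (Gᵀ * Lam⁻¹ * Ybar) := by
      rw [hM, Matrix.add_mul, Matrix.smul_mul, Matrix.mul_assoc (Gam⁻¹ * Pbar) Yd Ybar,
        Matrix.mul_assoc Gam⁻¹ Pbar (Yd * Ybar), Matrix.mul_assoc (Gᵀ * Lam⁻¹ * Ybar) Yd Ybar,
        Matrix.mul_assoc (Gᵀ * Lam⁻¹) Ybar (Yd * Ybar),
        ← Matrix.mul_assoc Ybar Yd Ybar, hYd1]
    rw [step1, hAU, hAb]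
    rw [vecMulVec_sub_left', vecMulVec_add_left', vecMulVec_smul_left',
      ← mul_vecMulVec', ← mul_vecMulVec', ← mul_vecMulVec']
    have hPb : Gam⁻¹ * P - Gam⁻¹ * vecMulVec ubar 1 = Gam⁻¹ * Pbar := by
      rw [hPbar, Matrix.mul_sub]
    have hYb : Gᵀ * Lam⁻¹ * Y - Gᵀ * Lam⁻¹ * vecMulVec ybar 1 = Gᵀ * Lam⁻¹ * Ybar := by
      rw [hYbar, Matrix.mul_sub]
    have hMb : M * Y - M * vecMulVec ybar 1 = M * Ybar := by
      rw [hYbar, Matrix.mul_sub]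
    have expand : Gam⁻¹ * P + α • (Gᵀ * Lam⁻¹ * Y) -
        (M * Y + (Gam⁻¹ * vecMulVec ubar 1 + α • (Gᵀ * Lam⁻¹ * vecMulVec ybar 1)
          - M * vecMulVec ybar 1)) =
        (Gam⁻¹ * P - Gam⁻¹ * vecMulVec ubar 1)
          + α • (Gᵀ * Lam⁻¹ * Y - Gᵀ * Lam⁻¹ * vecMulVec ybar 1)
          - (M * Y - M * vecMulVec ybar 1) := by
      module
    rw [expand, hPb, hYb, hMb, step2, Matrix.mul_sub]
    module
  -- R0 annihilates Yᵀ and 1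
  have hC1 : (Pbar - Pbar * (Yd * Ybar)) *ᵥ 1 = 0 := by
    rw [Matrix.sub_mulVec, hP1, ← Matrix.mulVec_mulVec, ← Matrix.mulVec_mulVec, hY1]
    simp
  have hR01 : R0 *ᵥ 1 = 0 := by
    rw [hR0, ← Matrix.mulVec_mulVec, hC1, Matrix.mulVec_zero]
  have hCY : (Pbar - Pbar * (Yd * Ybar)) * Yᵀ = 0 := by
    have hYeq : Y = Ybar + vecMulVec ybar 1 := by rw [hYbar]; abel
    have h1 : (Pbar - Pbar * (Yd * Ybar)) * Ybarᵀ = 0 := by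
      have key : Yd * Ybar * Ybarᵀ = Ybarᵀ := by
        calc Yd * Ybar * Ybarᵀ = (Yd * Ybar)ᵀ * Ybarᵀ := by rw [hYd4]
          _ = (Ybar * (Yd * Ybar))ᵀ := by rw [← Matrix.transpose_mul]
          _ = Ybarᵀ := by rw [← Matrix.mul_assoc, hYd1]
      rw [Matrix.sub_mul, Matrix.mul_assoc Pbar (Yd * Ybar) Ybarᵀ, key, sub_self]
    have h2 : (Pbar - Pbar * (Yd * Ybar)) * vecMulVec (1 : Fin nt → ℝ) ybar = 0 := by
      rw [mul_vecMulVec', hC1, vecMulVec_zero_left']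
    rw [hYeq, Matrix.transpose_add, transpose_vecMulVec', Matrix.mul_add, h1, h2, add_zero]
  have hR0Y : R0 * Yᵀ = 0 := by
    rw [hR0, Matrix.mul_assoc, hCY, Matrix.mul_zero]
  -- main argument
  intro W b
  rw [hL, hL, ← hU]
  set V := (W - WI) * Y + vecMulVec (b - bI) 1 with hV
  have hsplit : W * Y + vecMulVec b 1 = U + V := by
    rw [hV, hU, Matrix.sub_mul, vecMulVec_sub_left']
    abel
  rw [hsplit]
  have e1 : P - (U + V) = (P - U) - V := by abel
  have e2 : Y - G * (U + V) = (Y - G * U) - G * V := by rw [Matrix.mul_add]; abel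
  rw [e1, e2, wnormSq_sub_expand hGiT (P - U) V, wnormSq_sub_expand hLiT (Y - G * U) (G * V)]
  have hlin : Matrix.trace (Vᵀ * Gam⁻¹ * (P - U)) +
      α * Matrix.trace ((G * V)ᵀ * Lam⁻¹ * (Y - G * U)) = 0 := by
    have htr : Matrix.trace (Vᵀ * Gam⁻¹ * (P - U)) +
        α * Matrix.trace ((G * V)ᵀ * Lam⁻¹ * (Y - G * U)) = Matrix.trace (Vᵀ * R0) := by
      simp only [hR0def, Matrix.mul_add, Matrix.mul_smul, Matrix.trace_add,
        Matrix.trace_smul, smul_eq_mul, Matrix.transpose_mul, Matrix.mul_assoc]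
    rw [htr, Matrix.trace_mul_comm]
    rw [hV, Matrix.transpose_add, Matrix.transpose_mul, transpose_vecMulVec',
      Matrix.mul_add, ← Matrix.mul_assoc R0 Yᵀ (W - WI)ᵀ, hR0Y, Matrix.zero_mul,
      mul_vecMulVec', hR01, vecMulVec_zero_left', add_zero, Matrix.trace_zero]
  have q1 : 0 ≤ wnormSq Gam⁻¹ V := trace_transpose_mul_mul_nonneg hGi.posSemidef V
  have q2 : 0 ≤ wnormSq Lam⁻¹ (G * V) :=
    trace_transpose_mul_mul_nonneg hLi.posSemidef (G * V)
  nlinarith [hlin, q1, q2, mul_nonneg hα q2]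
end

section
/- Let Γ ∈ ℝ^{m×m} and Λ ∈ ℝ^{n×n} be symmetric positive definite, α > 0, A = Γ⁻¹ + α·Gᵀ·Λ⁻¹·G, let Yd ∈ ℝ^{nt×n} be a Moore–Penrose pseudoinverse of Ȳ, and define Wᴵ = A⁻¹·(Γ⁻¹·P̄·Yd + α·Gᵀ·Λ⁻¹·Ȳ·Yd) and bᴵ = A⁻¹·(Γ⁻¹·ū + α·Gᵀ·Λ⁻¹·ȳ − (Γ⁻¹·P̄·Yd + α·Gᵀ·Λ⁻¹·Ȳ·Yd)·ȳ). Fix an observational data vector y ∈ ℝ^n and define the data-informed reference parameter u₀ = ū + P̄·Yd·(y − ȳ) − α·Γ·Gᵀ·Λ⁻¹·(I_n − Ȳ·Yd)·(y − ȳ). Then the model-constrained DNN inverse solution Wᴵ·y + bᴵ is exactly the unique global minimizer of the Tikhonov-regularized functional F(u) = (1/2)·(y − G·u)ᵀ·Λ⁻¹·(y − G·u) + (1/(2α))·(u − u₀)ᵀ·Γ⁻¹·(u − u₀). -/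
open Matrix

/-- The mcDNN inverse solution `Wᴵ y + bᴵ` is exactly the unique global
minimizer of the Tikhonov-regularized functional with the data-informed
reference parameter `u₀`. -/
theorem mcDNN_solution_is_tikhonov_minimizer
    {m n nt : ℕ} (hm : 0 < m) (hn : 0 < n) (hnt : 0 < nt)
    (P : Matrix (Fin m) (Fin nt) ℝ) (Y : Matrix (Fin n) (Fin nt) ℝ)
    (G : Matrix (Fin n) (Fin m) ℝ)
    (Gam : Matrix (Fin m) (Fin m) ℝ) (Lam : Matrix (Fin n) (Fin n) ℝ)
    (hGam : Gam.PosDef) (hLam : Lam.PosDef)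
    (α : ℝ) (hα : 0 < α)
    (ubar : Fin m → ℝ) (hubar : ubar = (nt : ℝ)⁻¹ • (P *ᵥ 1))
    (ybar : Fin n → ℝ) (hybar : ybar = (nt : ℝ)⁻¹ • (Y *ᵥ 1))
    (Pbar : Matrix (Fin m) (Fin nt) ℝ) (hPbar : Pbar = P - vecMulVec ubar 1)
    (Ybar : Matrix (Fin n) (Fin nt) ℝ) (hYbar : Ybar = Y - vecMulVec ybar 1)
    (Yd : Matrix (Fin nt) (Fin n) ℝ)
    (hYd1 : Ybar * Yd * Ybar = Ybar) (hYd2 : Yd * Ybar * Yd = Yd)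
    (hYd3 : (Ybar * Yd)ᵀ = Ybar * Yd) (hYd4 : (Yd * Ybar)ᵀ = Yd * Ybar)
    (A : Matrix (Fin m) (Fin m) ℝ) (hA : A = Gam⁻¹ + α • (Gᵀ * Lam⁻¹ * G))
    (WI : Matrix (Fin m) (Fin n) ℝ)
    (hWI : WI = A⁻¹ * (Gam⁻¹ * Pbar * Yd + α • (Gᵀ * Lam⁻¹ * Ybar * Yd)))
    (bI : Fin m → ℝ)
    (hbI : bI = A⁻¹ *ᵥ (Gam⁻¹ *ᵥ ubar + α • ((Gᵀ * Lam⁻¹) *ᵥ ybar)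
      - (Gam⁻¹ * Pbar * Yd + α • (Gᵀ * Lam⁻¹ * Ybar * Yd)) *ᵥ ybar))
    (y : Fin n → ℝ)
    (u0 : Fin m → ℝ)
    (hu0 : u0 = ubar + (Pbar * Yd) *ᵥ (y - ybar)
      - α • ((Gam * Gᵀ * Lam⁻¹ * (1 - Ybar * Yd)) *ᵥ (y - ybar)))
    (F : (Fin m → ℝ) → ℝ)
    (hF : ∀ u, F u =
      (1 / 2) * ((y - G *ᵥ u) ⬝ᵥ (Lam⁻¹ *ᵥ (y - G *ᵥ u))) +
      (1 / (2 * α)) * ((u - u0) ⬝ᵥ (Gam⁻¹ *ᵥ (u - u0)))) :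
    ∀ u : Fin m → ℝ, u ≠ WI *ᵥ y + bI → F (WI *ᵥ y + bI) < F u := by
  -- basic facts
  have hLinv : Lam⁻¹.PosDef := hLam.inv
  have hGinv : Gam⁻¹.PosDef := hGam.inv
  have hLs : Lam⁻¹ᵀ = Lam⁻¹ := by simpa using hLinv.isHermitian.eq
  have hGts : Gam⁻¹ᵀ = Gam⁻¹ := by simpa using hGinv.isHermitian.eq
  have hGiG : Gam⁻¹ * Gam = 1 :=
    nonsing_inv_mul _ ((isUnit_iff_isUnit_det _).1 hGam.isUnit)
  -- A is positive definite, hence invertible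
  have hPSD : (α • (Gᵀ * Lam⁻¹ * G)).PosSemidef := by
    have h1 : (Gᵀ * Lam⁻¹ * G).PosSemidef := by
      simpa using hLinv.posSemidef.conjTranspose_mul_mul_same G
    refine PosSemidef.of_dotProduct_mulVec_nonneg ?_ (fun x => ?_)
    · show _ = _
      rw [conjTranspose_smul, h1.isHermitian.eq, star_trivial]
    · have h2 : 0 ≤ x ⬝ᵥ ((Gᵀ * Lam⁻¹ * G) *ᵥ x) := by simpa using h1.dotProduct_mulVec_nonneg x
      simpa [smul_mulVec, dotProduct_smul] using smul_nonneg hα.le h2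
  have hAPD : A.PosDef := hA ▸ hGinv.add_posSemidef hPSD
  have hAAi : A * A⁻¹ = 1 :=
    mul_nonsing_inv _ ((isUnit_iff_isUnit_det _).1 hAPD.isUnit)
  -- symmetric dot product lemma
  have symdot : ∀ {k : ℕ} (M : Matrix (Fin k) (Fin k) ℝ), Mᵀ = M →
      ∀ x v : Fin k → ℝ, x ⬝ᵥ (M *ᵥ v) = v ⬝ᵥ (M *ᵥ x) := by
    intro k M hM x v
    rw [dotProduct_mulVec, ← mulVec_transpose, hM, dotProduct_comm]
  obtain ⟨ustar, hustar⟩ : ∃ v, v = WI *ᵥ y + bI := ⟨_, rfl⟩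
  -- stationarity: A ustar = Γ⁻¹ u0 + α Gᵀ Λ⁻¹ y
  have hstat : A *ᵥ ustar = Gam⁻¹ *ᵥ u0 + α • ((Gᵀ * Lam⁻¹) *ᵥ y) := by
    have h1 : A *ᵥ ustar =
        (Gam⁻¹ * Pbar * Yd + α • (Gᵀ * Lam⁻¹ * Ybar * Yd)) *ᵥ y
        + (Gam⁻¹ *ᵥ ubar + α • ((Gᵀ * Lam⁻¹) *ᵥ ybar)
          - (Gam⁻¹ * Pbar * Yd + α • (Gᵀ * Lam⁻¹ * Ybar * Yd)) *ᵥ ybar) := by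
      rw [hustar, hWI, hbI, mulVec_add, mulVec_mulVec, ← Matrix.mul_assoc,
        hAAi, Matrix.one_mul, mulVec_mulVec, hAAi, one_mulVec]
    have hbig : Gam⁻¹ * (Gam * Gᵀ * Lam⁻¹ * (1 - Ybar * Yd)) =
        Gᵀ * Lam⁻¹ * (1 - Ybar * Yd) := by
      rw [show Gam * Gᵀ * Lam⁻¹ * (1 - Ybar * Yd)
            = Gam * (Gᵀ * Lam⁻¹ * (1 - Ybar * Yd)) by
          simp only [Matrix.mul_assoc],
        ← Matrix.mul_assoc, hGiG, Matrix.one_mul]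
    rw [h1, hu0, mulVec_sub, mulVec_add, mulVec_smul, mulVec_mulVec,
      mulVec_mulVec, hbig]
    simp only [add_mulVec, sub_mulVec, smul_mulVec, Matrix.mul_sub,
      Matrix.mul_one, mulVec_sub, mulVec_add, smul_sub, smul_add,
      Matrix.mul_assoc]
    module
  -- fix u
  intro u hu
  rw [← hustar] at hu ⊢
  obtain ⟨d, hd⟩ : ∃ v, v = u - ustar := ⟨_, rfl⟩
  have hdne : d ≠ 0 := hd ▸ sub_ne_zero_of_ne hu
  obtain ⟨r, hr⟩ : ∃ v, v = y - G *ᵥ ustar := ⟨_, rfl⟩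
  obtain ⟨s, hs⟩ : ∃ v, v = ustar - u0 := ⟨_, rfl⟩
  obtain ⟨w, hw⟩ : ∃ v, v = (Gᵀ * Lam⁻¹) *ᵥ r := ⟨_, rfl⟩
  -- Γ⁻¹ s = α • w
  have hGsw : Gam⁻¹ *ᵥ s = α • w := by
    have h := hstat
    rw [hA, add_mulVec, smul_mulVec] at h
    have h' : Gam⁻¹ *ᵥ ustar = Gam⁻¹ *ᵥ u0 + α • ((Gᵀ * Lam⁻¹) *ᵥ y)
        - α • ((Gᵀ * Lam⁻¹ * G) *ᵥ ustar) := eq_sub_of_add_eq h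
    rw [hs, mulVec_sub, h', hw, hr, mulVec_sub, smul_sub, mulVec_mulVec]
    abel
  -- decompositions
  have hyu : y - G *ᵥ u = r - G *ᵥ d := by
    rw [hr, hd, mulVec_sub]; abel
  have hud : u - u0 = s + d := by rw [hs, hd]; abel
  -- cross term identities
  have hc1 : r ⬝ᵥ (Lam⁻¹ *ᵥ (G *ᵥ d)) = w ⬝ᵥ d := by
    rw [mulVec_mulVec, dotProduct_mulVec, ← mulVec_transpose, transpose_mul,
      hLs, ← hw]
  have hc1' : (G *ᵥ d) ⬝ᵥ (Lam⁻¹ *ᵥ r) = w ⬝ᵥ d := by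
    rw [symdot Lam⁻¹ hLs, hc1]
  have hc2 : d ⬝ᵥ (Gam⁻¹ *ᵥ s) = α * (w ⬝ᵥ d) := by
    rw [hGsw, dotProduct_smul, smul_eq_mul, dotProduct_comm]
  have hc2' : s ⬝ᵥ (Gam⁻¹ *ᵥ d) = α * (w ⬝ᵥ d) := by
    rw [symdot Gam⁻¹ hGts, hc2]
  -- quadratic expansions
  have hq1 : (r - G *ᵥ d) ⬝ᵥ (Lam⁻¹ *ᵥ (r - G *ᵥ d))
      = r ⬝ᵥ (Lam⁻¹ *ᵥ r) - 2 * (w ⬝ᵥ d)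
        + (G *ᵥ d) ⬝ᵥ (Lam⁻¹ *ᵥ (G *ᵥ d)) := by
    rw [mulVec_sub, dotProduct_sub, sub_dotProduct, sub_dotProduct, hc1, hc1']
    ring
  have hq2 : (s + d) ⬝ᵥ (Gam⁻¹ *ᵥ (s + d))
      = s ⬝ᵥ (Gam⁻¹ *ᵥ s) + 2 * (α * (w ⬝ᵥ d))
        + d ⬝ᵥ (Gam⁻¹ *ᵥ d) := by
    rw [mulVec_add, dotProduct_add, add_dotProduct, add_dotProduct, hc2, hc2']
    ring
  -- key identity
  have key : F u = F ustar
      + (1 / 2) * ((G *ᵥ d) ⬝ᵥ (Lam⁻¹ *ᵥ (G *ᵥ d)))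
      + (1 / (2 * α)) * (d ⬝ᵥ (Gam⁻¹ *ᵥ d)) := by
    rw [hF u, hF ustar, hyu, hud, hq1, hq2, ← hr, ← hs]
    field_simp
    ring
  -- positivity
  have hpos1 : 0 ≤ (G *ᵥ d) ⬝ᵥ (Lam⁻¹ *ᵥ (G *ᵥ d)) := by
    simpa using hLinv.posSemidef.dotProduct_mulVec_nonneg (G *ᵥ d)
  have hpos2 : 0 < d ⬝ᵥ (Gam⁻¹ *ᵥ d) := by
    simpa using hGinv.dotProduct_mulVec_pos hdne
  have h2α : 0 < 1 / (2 * α) := by positivity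
  nlinarith [mul_pos h2α hpos2, mul_nonneg (by norm_num : (0:ℝ) ≤ 1/2) hpos1]
end

section
/- Assume the training data is noiseless, i.e. Y = G·P, and let α > 0, β > 0. Define the linear model-constrained encoder (mcEncoder) loss J(We, be, Wd, bd) = (1/2)·‖Y − Wd·(We·Y + be·𝟙ᵀ) − bd·𝟙ᵀ‖² + (α/2)·‖P − We·Y − be·𝟙ᵀ‖² + (β/2)·‖Y − G·We·Y − G·be·𝟙ᵀ‖², for We ∈ ℝ^{m×n}, be ∈ ℝ^m, Wd ∈ ℝ^{n×m}, bd ∈ ℝ^n. Then there exists at least one stationary point (We, be, Wd, bd) of J (a point where the Fréchet derivative of J vanishes) satisfying the four identities: be = ū − We·ȳ, bd = ȳ − Wd·ū, We = We·Wd·We, and We = We·G·We. -/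
open Matrix

attribute [local instance] Matrix.seminormedAddCommGroup Matrix.normedAddCommGroup
  Matrix.normedSpace

namespace McAux

/-- left-multiplication `B ↦ A * B` as a linear map -/
def mulLin {a b c : ℕ} (A : Matrix (Fin a) (Fin b) ℝ) :
    Matrix (Fin b) (Fin c) ℝ →ₗ[ℝ] Matrix (Fin a) (Fin c) ℝ where
  toFun B := A * B
  map_add' := Matrix.mul_add A
  map_smul' r B := (Matrix.mul_smul A r B)

/-- matrix multiplication as a continuous bilinear map -/
noncomputable def mulCLM (a b c : ℕ) :
    Matrix (Fin a) (Fin b) ℝ →L[ℝ] Matrix (Fin b) (Fin c) ℝ →L[ℝ] Matrix (Fin a) (Fin c) ℝ :=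
  LinearMap.toContinuousLinearMap
  { toFun := fun A => LinearMap.toContinuousLinearMap (mulLin A)
    map_add' := fun A A' => by ext B; simp [mulLin, Matrix.add_mul]
    map_smul' := fun r A => by ext B; simp [mulLin, Matrix.smul_mul] }

@[simp] lemma mulCLM_apply {a b c : ℕ} (A : Matrix (Fin a) (Fin b) ℝ)
    (B : Matrix (Fin b) (Fin c) ℝ) : mulCLM a b c A B = A * B := by
  simp [mulCLM, mulLin]

noncomputable def traceCLM (k : ℕ) : Matrix (Fin k) (Fin k) ℝ →L[ℝ] ℝ :=
  LinearMap.toContinuousLinearMap (Matrix.traceLinearMap (Fin k) ℝ ℝ)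

@[simp] lemma traceCLM_apply {k : ℕ} (X : Matrix (Fin k) (Fin k) ℝ) :
    traceCLM k X = Matrix.trace X := by simp [traceCLM]

noncomputable def transCLM (a b : ℕ) :
    Matrix (Fin a) (Fin b) ℝ →L[ℝ] Matrix (Fin b) (Fin a) ℝ :=
  LinearMap.toContinuousLinearMap
  { toFun := fun A => Aᵀ
    map_add' := Matrix.transpose_add
    map_smul' := fun r A => Matrix.transpose_smul r A }

@[simp] lemma transCLM_apply {a b : ℕ} (A : Matrix (Fin a) (Fin b) ℝ) :
    transCLM a b A = Aᵀ := by simp [transCLM]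

noncomputable def vmvCLM (a b : ℕ) : (Fin a → ℝ) →L[ℝ] Matrix (Fin a) (Fin b) ℝ :=
  LinearMap.toContinuousLinearMap
  { toFun := fun u => vecMulVec u 1
    map_add' := fun u v => by ext i j; simp [vecMulVec_apply, add_mul]
    map_smul' := fun r u => by ext i j; simp [vecMulVec_apply, mul_assoc] }

@[simp] lemma vmvCLM_apply {a b : ℕ} (u : Fin a → ℝ) :
    vmvCLM a b u = vecMulVec u (1 : Fin b → ℝ) := by simp [vmvCLM]

variable {E : Type*} [NormedAddCommGroup E] [NormedSpace ℝ E]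

lemma hasFDerivAt_matmul {a b c : ℕ}
    {f : E → Matrix (Fin a) (Fin b) ℝ} {g : E → Matrix (Fin b) (Fin c) ℝ}
    {f' : E →L[ℝ] Matrix (Fin a) (Fin b) ℝ} {g' : E →L[ℝ] Matrix (Fin b) (Fin c) ℝ}
    {x : E} (hf : HasFDerivAt f f' x) (hg : HasFDerivAt g g' x) :
    HasFDerivAt (fun w => f w * g w)
      ((mulCLM a b c (f x)).comp g' + (show E →L[ℝ] Matrix (Fin a) (Fin c) ℝ from
        ((mulCLM a b c).flip (g x)).comp f')) x := by
  have hb := (mulCLM a b c).isBoundedBilinearMap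
  have h1 := (hb.hasFDerivAt (f x, g x)).comp x (hf.prodMk hg)
  have hfun : (fun w => f w * g w)
      = (fun p : Matrix (Fin a) (Fin b) ℝ × Matrix (Fin b) (Fin c) ℝ => mulCLM a b c p.1 p.2)
        ∘ (fun w => (f w, g w)) := by
    funext w; simp [Function.comp]
  rw [hfun]
  refine h1.congr_fderiv ?_
  ext h
  simp [IsBoundedBilinearMap.deriv_apply]
  rfl

lemma hasFDerivAt_frobSq {k l : ℕ} (X : Matrix (Fin k) (Fin l) ℝ) :
    HasFDerivAt frobSq ((2:ℝ) • ((traceCLM l).comp (mulCLM l k l Xᵀ))) X := by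
  have h1 : HasFDerivAt (fun Z : Matrix (Fin k) (Fin l) ℝ => Zᵀ)
      (transCLM k l) X := by
    convert (transCLM k l).hasFDerivAt (x := X) using 1
    funext Z; simp
  have h2 := hasFDerivAt_matmul (f := fun Z : Matrix (Fin k) (Fin l) ℝ => Zᵀ)
    (g := fun Z : Matrix (Fin k) (Fin l) ℝ => Z) h1 (hasFDerivAt_id X)
  have h3 := (traceCLM l).hasFDerivAt.comp X h2
  have hfun : frobSq = (fun Z => traceCLM l Z) ∘ (fun Z : Matrix (Fin k) (Fin l) ℝ => Zᵀ * Z) := by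
    funext Z; simp [frobSq, Function.comp]
  rw [hfun]
  refine h3.congr_fderiv ?_
  ext h
  have htr : Matrix.trace (hᵀ * X) = Matrix.trace (Xᵀ * h) := by
    rw [← Matrix.trace_transpose (hᵀ * X), Matrix.transpose_mul, Matrix.transpose_transpose]
  change Matrix.trace (Xᵀ * h + hᵀ * X) = 2 * Matrix.trace (Xᵀ * h)
  rw [Matrix.trace_add, htr]
  ring

lemma HasFDerivAt.frobSq_comp {k l : ℕ}
    {f : E → Matrix (Fin k) (Fin l) ℝ} {f' : E →L[ℝ] Matrix (Fin k) (Fin l) ℝ}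
    {x : E} (hf : HasFDerivAt f f' x) :
    HasFDerivAt (fun w => frobSq (f w))
      ((2:ℝ) • ((traceCLM l).comp ((mulCLM l k l (f x)ᵀ).comp f'))) x := by
  refine ((hasFDerivAt_frobSq (f x)).comp x hf).congr_fderiv ?_
  ext h
  simp [two_smul]
  rfl

lemma vecMulVec_mulMat {a b c : ℕ} (u : Fin a → ℝ) (v : Fin b → ℝ) (M : Matrix (Fin b) (Fin c) ℝ) :
    vecMulVec u v * M = vecMulVec u (v ᵥ* M) := by
  ext i j
  simp [Matrix.mul_apply, vecMulVec_apply, Matrix.vecMul, dotProduct, Finset.mul_sum,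
    mul_assoc]

lemma mat_mul_vecMulVec {a b c : ℕ} (M : Matrix (Fin a) (Fin b) ℝ) (u : Fin b → ℝ)
    (v : Fin c → ℝ) : M * vecMulVec u v = vecMulVec (M *ᵥ u) v := by
  ext i j
  simp [Matrix.mul_apply, vecMulVec_apply, Matrix.mulVec, dotProduct, Finset.sum_mul,
    mul_assoc]

lemma vecMulVec_zero_left {a b : ℕ} (v : Fin b → ℝ) :
    vecMulVec (0 : Fin a → ℝ) v = 0 := by
  ext i j; simp [vecMulVec_apply]

lemma vecMulVec_zero_right {a b : ℕ} (u : Fin a → ℝ) :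
    vecMulVec u (0 : Fin b → ℝ) = 0 := by
  ext i j; simp [vecMulVec_apply]

lemma vecMulVec_transpose' {a b : ℕ} (u : Fin a → ℝ) (v : Fin b → ℝ) :
    (vecMulVec u v)ᵀ = vecMulVec v u := by
  ext i j; simp [vecMulVec_apply, Matrix.transpose_apply, mul_comm]

lemma vecMulVec_sub_left {a b : ℕ} (u u' : Fin a → ℝ) (v : Fin b → ℝ) :
    vecMulVec (u - u') v = vecMulVec u v - vecMulVec u' v := by
  ext i j; simp [vecMulVec_apply, sub_mul]

lemma vecMulVec_one_mulVec_one {a nt : ℕ} (u : Fin a → ℝ) :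
    vecMulVec u (1 : Fin nt → ℝ) *ᵥ (1 : Fin nt → ℝ) = (nt : ℝ) • u := by
  ext i
  simp [Matrix.mulVec, vecMulVec_apply, dotProduct, Finset.sum_const, mul_comm]

lemma eq_zero_of_mul_transpose_self {a b : ℕ} (X : Matrix (Fin a) (Fin b) ℝ)
    (h : X * Xᵀ = 0) : X = 0 := by
  ext i j
  have hd : (X * Xᵀ) i i = 0 := by rw [h]; rfl
  rw [Matrix.mul_apply] at hd
  simp only [Matrix.transpose_apply] at hd
  have hsq : ∀ k ∈ Finset.univ, (0:ℝ) ≤ X i k * X i k := fun k _ => mul_self_nonneg _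
  have h0 := (Finset.sum_eq_zero_iff_of_nonneg hsq).mp hd j (Finset.mem_univ j)
  have h1 := mul_self_eq_zero.mp h0
  simp [h1]

lemma exists_C {m n nt : ℕ} (Yb : Matrix (Fin n) (Fin nt) ℝ) (Pb : Matrix (Fin m) (Fin nt) ℝ) :
    ∃ C : Matrix (Fin m) (Fin n) ℝ,
      C * ((Yb * Ybᵀ) * (Yb * Ybᵀ)) = Pb * Ybᵀ := by
  set A := Yb * Ybᵀ with hA
  have hAT : Aᵀ = A := by rw [hA, Matrix.transpose_mul, Matrix.transpose_transpose]
  have hAAT : (A * A)ᵀ = A * A := by rw [Matrix.transpose_mul, hAT]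
  have hle : LinearMap.range (A * A).mulVecLin ≤ LinearMap.range Yb.mulVecLin := by
    rintro _ ⟨v, rfl⟩
    refine ⟨(Ybᵀ * A) *ᵥ v, ?_⟩
    simp only [Matrix.mulVecLin_apply, Matrix.mulVec_mulVec]
    rw [← Matrix.mul_assoc, ← hA]
  have hrank : (A * A).rank = Yb.rank := by
    have h1 : (A * A).rank = A.rank := by
      have := Matrix.rank_self_mul_transpose A
      rwa [hAT] at this
    rw [h1, hA]
    exact Matrix.rank_self_mul_transpose Yb
  have heq : LinearMap.range (A * A).mulVecLin = LinearMap.range Yb.mulVecLin :=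
    Submodule.eq_of_le_of_finrank_eq hle hrank
  have hcols : ∀ i : Fin m, ∃ x : Fin n → ℝ,
      (A * A) *ᵥ x = fun j => (Yb * Pbᵀ) j i := by
    intro i
    have hmem : (fun j => (Yb * Pbᵀ) j i) ∈ LinearMap.range Yb.mulVecLin := by
      refine ⟨fun k => Pbᵀ k i, ?_⟩
      ext j
      simp [Matrix.mulVecLin_apply, Matrix.mulVec, Matrix.mul_apply, dotProduct]
    rw [← heq] at hmem
    obtain ⟨x, hx⟩ := hmem
    exact ⟨x, hx⟩
  choose x hx using hcols
  refine ⟨Matrix.of (fun i j => x i j), ?_⟩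
  ext i j
  have h1 := congrFun (hx i) j
  simp only [Matrix.mulVec, dotProduct] at h1
  rw [Matrix.mul_apply]
  have hsym : ∀ k, (A * A) k j = (A * A) j k := by
    intro k
    conv_lhs => rw [← hAAT]
    rfl
  calc ∑ k, (Matrix.of (fun i j => x i j)) i k * (A * A) k j
      = ∑ k, (A * A) j k * x i k := by
        refine Finset.sum_congr rfl fun k _ => ?_
        rw [hsym k, mul_comm]; rfl
    _ = (Yb * Pbᵀ) j i := h1
    _ = (Pb * Ybᵀ) i j := by
        rw [Matrix.mul_apply, Matrix.mul_apply]
        refine Finset.sum_congr rfl fun k _ => ?_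
        simp [Matrix.transpose_apply, mul_comm]

end McAux

open McAux

/-- For noiseless data `Y = G P`, there exists at least one stationary point
of the mcEncoder loss satisfying the four identities
`be = ū − We ȳ`, `bd = ȳ − Wd ū`, `We = We Wd We`, `We = We G We`. -/
theorem mcEncoder_exists_stationary_point
    {m n nt : ℕ} (hm : 0 < m) (hn : 0 < n) (hnt : 0 < nt)
    (P : Matrix (Fin m) (Fin nt) ℝ) (G : Matrix (Fin n) (Fin m) ℝ)
    (Y : Matrix (Fin n) (Fin nt) ℝ) (hY : Y = G * P)
    (α β : ℝ) (hα : 0 < α) (hβ : 0 < β)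
    (ubar : Fin m → ℝ) (hubar : ubar = (nt : ℝ)⁻¹ • (P *ᵥ 1))
    (ybar : Fin n → ℝ) (hybar : ybar = (nt : ℝ)⁻¹ • (Y *ᵥ 1))
    (J : Matrix (Fin m) (Fin n) ℝ × (Fin m → ℝ) ×
         Matrix (Fin n) (Fin m) ℝ × (Fin n → ℝ) → ℝ)
    (hJ : ∀ We be Wd bd, J (We, be, Wd, bd) =
      (1 / 2) * frobSq (Y - Wd * (We * Y + vecMulVec be 1) - vecMulVec bd 1) +
      (α / 2) * frobSq (P - We * Y - vecMulVec be 1) +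
      (β / 2) * frobSq (Y - G * We * Y - G * vecMulVec be 1)) :
    ∃ (We : Matrix (Fin m) (Fin n) ℝ) (be : Fin m → ℝ)
      (Wd : Matrix (Fin n) (Fin m) ℝ) (bd : Fin n → ℝ),
      HasFDerivAt J (0 : _ →L[ℝ] ℝ) (We, be, Wd, bd) ∧
      be = ubar - We *ᵥ ybar ∧
      bd = ybar - Wd *ᵥ ubar ∧
      We = We * Wd * We ∧
      We = We * G * We := by
  classical
  have hnt0 : (nt : ℝ) ≠ 0 := Nat.cast_ne_zero.mpr hnt.ne'
  set Pb : Matrix (Fin m) (Fin nt) ℝ := P - vecMulVec ubar 1 with hPb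
  set Yb : Matrix (Fin n) (Fin nt) ℝ := Y - vecMulVec ybar 1 with hYb
  obtain ⟨C, hC⟩ := McAux.exists_C Yb Pb
  set A : Matrix (Fin n) (Fin n) ℝ := Yb * Ybᵀ with hA
  have hAT : Aᵀ = A := by rw [hA, Matrix.transpose_mul, Matrix.transpose_transpose]
  set We : Matrix (Fin m) (Fin n) ℝ := C * A with hWe
  set be : Fin m → ℝ := ubar - We *ᵥ ybar with hbe
  set bd : Fin n → ℝ := ybar - G *ᵥ ubar with hbd
  have hP1 : P *ᵥ 1 = (nt : ℝ) • ubar := by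
    rw [hubar, smul_smul, mul_inv_cancel₀ hnt0, one_smul]
  have hY1 : Y *ᵥ 1 = (nt : ℝ) • ybar := by
    rw [hybar, smul_smul, mul_inv_cancel₀ hnt0, one_smul]
  have hyG : ybar = G *ᵥ ubar := by
    rw [hybar, hubar, hY, ← Matrix.mulVec_mulVec, Matrix.mulVec_smul]
  have hbd0 : bd = 0 := by rw [hbd, hyG, sub_self]
  have hPb1 : Pb *ᵥ 1 = 0 := by
    rw [hPb, Matrix.sub_mulVec, hP1, McAux.vecMulVec_one_mulVec_one, sub_self]
  have hYb1 : Yb *ᵥ 1 = 0 := by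
    rw [hYb, Matrix.sub_mulVec, hY1, McAux.vecMulVec_one_mulVec_one, sub_self]
  set Ee : Matrix (Fin m) (Fin nt) ℝ := P - We * Y - vecMulVec be 1 with hEe
  have hEc : Ee = Pb - We * Yb := by
    rw [hEe, hbe, McAux.vecMulVec_sub_left, hPb, hYb, Matrix.mul_sub,
      McAux.mat_mul_vecMulVec]
    abel
  have hE1 : Ee *ᵥ 1 = 0 := by
    rw [hEc, Matrix.sub_mulVec, hPb1, ← Matrix.mulVec_mulVec, hYb1, Matrix.mulVec_zero,
      sub_self]
  have hGPb : G * Pb = Yb := by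
    rw [hPb, hYb, Matrix.mul_sub, ← hY, McAux.mat_mul_vecMulVec, ← hyG]
  have hWYY : We * Yb * Ybᵀ = Pb * Ybᵀ := by
    rw [Matrix.mul_assoc, ← hA, hWe, Matrix.mul_assoc, hC]
  have hEYb : Ee * Ybᵀ = 0 := by
    rw [hEc, Matrix.sub_mul, hWYY, sub_self]
  have hEY : Ee * Yᵀ = 0 := by
    have hYsplit : Yᵀ = Ybᵀ + vecMulVec 1 ybar := by
      rw [hYb, Matrix.transpose_sub, McAux.vecMulVec_transpose']
      abel
    rw [hYsplit, Matrix.mul_add, hEYb, McAux.mat_mul_vecMulVec, hE1,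
      McAux.vecMulVec_zero_left, add_zero]
  have hYE : Y * Eeᵀ = 0 := by
    have h := congrArg Matrix.transpose hEY
    rwa [Matrix.transpose_mul, Matrix.transpose_transpose, Matrix.transpose_zero] at h
  have hM0E : (We * Y + vecMulVec be 1) * Eeᵀ = 0 := by
    rw [Matrix.add_mul, Matrix.mul_assoc, hYE, Matrix.mul_zero, McAux.vecMulVec_mulMat,
      Matrix.vecMul_transpose, hE1, McAux.vecMulVec_zero_right, add_zero]
  -- the projector identity We * G * We = We
  have hGB : G * (Pb * Ybᵀ) = A := by rw [← Matrix.mul_assoc, hGPb]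
  have hTA : (A * G * C) * (A * A) = A * A := by
    rw [Matrix.mul_assoc (A * G) C (A * A), hC, Matrix.mul_assoc A G (Pb * Ybᵀ), hGB]
  have hX0 : (A * G * C - 1) * A = 0 := by
    apply McAux.eq_zero_of_mul_transpose_self
    have hstep : ((A * G * C - 1) * A) * ((A * G * C - 1) * A)ᵀ
        = ((A * G * C - 1) * (A * A)) * (A * G * C - 1)ᵀ := by
      rw [Matrix.transpose_mul, hAT, Matrix.mul_assoc (A * G * C - 1) A (A * (A * G * C - 1)ᵀ),
        Matrix.mul_assoc (A * G * C - 1) (A * A) (A * G * C - 1)ᵀ,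
        Matrix.mul_assoc A A ((A * G * C - 1)ᵀ)]
    rw [hstep]
    have hz : (A * G * C - 1) * (A * A) = 0 := by
      rw [Matrix.sub_mul, Matrix.one_mul, hTA, sub_self]
    rw [hz, Matrix.zero_mul]
  have hACA : A * G * C * A = A := by
    have h := hX0
    rw [Matrix.sub_mul, Matrix.one_mul, sub_eq_zero] at h
    exact h
  have hWGW : We * G * We = We := by
    have hACA' : A * (G * (C * A)) = A := by
      have := hACA
      rwa [Matrix.mul_assoc (A * G) C A, Matrix.mul_assoc A G (C * A)] at this
    rw [hWe, Matrix.mul_assoc C A G, Matrix.mul_assoc C (A * G) (C * A),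
      Matrix.mul_assoc A G (C * A), hACA']
  -- residual values at the stationary point
  have hR1v : Y - G * (We * Y + vecMulVec be 1) - vecMulVec bd 1 = G * Ee := by
    rw [hbd0, McAux.vecMulVec_zero_left, sub_zero, hEe, hY, Matrix.mul_add,
      Matrix.mul_sub, Matrix.mul_sub]
    abel
  have hR2v : P - We * Y - vecMulVec be 1 = Ee := hEe.symm
  have hR3v : Y - G * We * Y - G * vecMulVec be 1 = G * Ee := by
    rw [hEe, hY, Matrix.mul_sub, Matrix.mul_sub, Matrix.mul_assoc]
  -- the six elementary vanishing traces
  have ztrW : ∀ M : Matrix (Fin m) (Fin nt) ℝ, M * Eeᵀ = 0 →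
      ∀ W : Matrix (Fin n) (Fin m) ℝ, Matrix.trace ((G * Ee)ᵀ * (W * M)) = 0 := by
    intro M hM W
    have hz : M * (G * Ee)ᵀ = 0 := by
      rw [Matrix.transpose_mul, ← Matrix.mul_assoc, hM, Matrix.zero_mul]
    rw [← Matrix.mul_assoc, Matrix.trace_mul_comm, ← Matrix.mul_assoc, hz, Matrix.zero_mul,
      Matrix.trace_zero]
  have hWYE : We * Y * Eeᵀ = 0 := by
    rw [Matrix.mul_assoc, hYE]
    simp
  have hbeE : vecMulVec be (1 : Fin nt → ℝ) * Eeᵀ = 0 := by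
    rw [McAux.vecMulVec_mulMat, Matrix.vecMul_transpose, hE1, McAux.vecMulVec_zero_right]
  have z1a := ztrW (We * Y) hWYE
  have z1b := ztrW (vecMulVec be (1 : Fin nt → ℝ)) hbeE
  have z2 : ∀ v : Fin n → ℝ, Matrix.trace ((G * Ee)ᵀ * vecMulVec v 1) = 0 := by
    intro v
    rw [Matrix.trace_mul_comm, McAux.vecMulVec_mulMat, Matrix.vecMul_transpose,
      ← Matrix.mulVec_mulVec, hE1, Matrix.mulVec_zero, McAux.vecMulVec_zero_right,
      Matrix.trace_zero]
  have z3 : ∀ W : Matrix (Fin m) (Fin n) ℝ,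
      Matrix.trace ((G * Ee)ᵀ * (G * (W * Y))) = 0 := by
    intro W
    have hz : Y * ((G * Ee)ᵀ * G) = 0 := by
      rw [Matrix.transpose_mul, ← Matrix.mul_assoc, ← Matrix.mul_assoc, hYE,
        Matrix.zero_mul, Matrix.zero_mul]
    rw [← Matrix.mul_assoc, Matrix.trace_mul_comm, Matrix.mul_assoc, hz, Matrix.mul_zero,
      Matrix.trace_zero]
  have z3' : ∀ W : Matrix (Fin m) (Fin n) ℝ,
      Matrix.trace ((G * Ee)ᵀ * (G * W * Y)) = 0 := by
    intro W
    rw [Matrix.mul_assoc G W Y]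
    exact z3 W
  have z4 : ∀ v : Fin m → ℝ, Matrix.trace ((G * Ee)ᵀ * (G * vecMulVec v 1)) = 0 := by
    intro v
    have hz : (1 : Fin nt → ℝ) ᵥ* ((G * Ee)ᵀ * G) = 0 := by
      rw [← Matrix.vecMul_vecMul, Matrix.vecMul_transpose, ← Matrix.mulVec_mulVec, hE1,
        Matrix.mulVec_zero, Matrix.zero_vecMul]
    rw [← Matrix.mul_assoc, Matrix.trace_mul_comm, McAux.vecMulVec_mulMat, hz,
      McAux.vecMulVec_zero_right, Matrix.trace_zero]
  have z5 : ∀ W : Matrix (Fin m) (Fin n) ℝ, Matrix.trace (Eeᵀ * (W * Y)) = 0 := by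
    intro W
    rw [Matrix.trace_mul_comm, Matrix.mul_assoc, hYE, Matrix.mul_zero, Matrix.trace_zero]
  have z6 : ∀ v : Fin m → ℝ, Matrix.trace (Eeᵀ * vecMulVec v 1) = 0 := by
    intro v
    rw [Matrix.trace_mul_comm, McAux.vecMulVec_mulMat, Matrix.vecMul_transpose, hE1,
      McAux.vecMulVec_zero_right, Matrix.trace_zero]
  refine ⟨We, be, G, bd, ?_, hbe, hbd, hWGW.symm, hWGW.symm⟩
  have hJfun : J = fun w : Matrix (Fin m) (Fin n) ℝ × (Fin m → ℝ) ×
      Matrix (Fin n) (Fin m) ℝ × (Fin n → ℝ) =>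
      (1 / 2) * frobSq (Y - w.2.2.1 * (w.1 * Y + vecMulVec w.2.1 1) - vecMulVec w.2.2.2 1) +
      (α / 2) * frobSq (P - w.1 * Y - vecMulVec w.2.1 1) +
      (β / 2) * frobSq (Y - G * w.1 * Y - G * vecMulVec w.2.1 1) := by
    funext w
    obtain ⟨a, b, c, d⟩ := w
    exact hJ a b c d
  rw [hJfun]
  set x₀ : Matrix (Fin m) (Fin n) ℝ × (Fin m → ℝ) ×
      Matrix (Fin n) (Fin m) ℝ × (Fin n → ℝ) := (We, be, G, bd) with hx₀
  let p1 := ContinuousLinearMap.fst ℝ (Matrix (Fin m) (Fin n) ℝ)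
    ((Fin m → ℝ) × Matrix (Fin n) (Fin m) ℝ × (Fin n → ℝ))
  let q1 := ContinuousLinearMap.snd ℝ (Matrix (Fin m) (Fin n) ℝ)
    ((Fin m → ℝ) × Matrix (Fin n) (Fin m) ℝ × (Fin n → ℝ))
  let p2 := (ContinuousLinearMap.fst ℝ (Fin m → ℝ)
    (Matrix (Fin n) (Fin m) ℝ × (Fin n → ℝ))).comp q1
  let q2 := (ContinuousLinearMap.snd ℝ (Fin m → ℝ)
    (Matrix (Fin n) (Fin m) ℝ × (Fin n → ℝ))).comp q1
  let p3 := (ContinuousLinearMap.fst ℝ (Matrix (Fin n) (Fin m) ℝ) (Fin n → ℝ)).comp q2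
  let p4 := (ContinuousLinearMap.snd ℝ (Matrix (Fin n) (Fin m) ℝ) (Fin n → ℝ)).comp q2
  have h1 : HasFDerivAt (fun w : Matrix (Fin m) (Fin n) ℝ × (Fin m → ℝ) ×
      Matrix (Fin n) (Fin m) ℝ × (Fin n → ℝ) => w.1) p1 x₀ := p1.hasFDerivAt
  have h2 : HasFDerivAt (fun w : Matrix (Fin m) (Fin n) ℝ × (Fin m → ℝ) ×
      Matrix (Fin n) (Fin m) ℝ × (Fin n → ℝ) => w.2.1) p2 x₀ := p2.hasFDerivAt
  have h3 : HasFDerivAt (fun w : Matrix (Fin m) (Fin n) ℝ × (Fin m → ℝ) ×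
      Matrix (Fin n) (Fin m) ℝ × (Fin n → ℝ) => w.2.2.1) p3 x₀ := p3.hasFDerivAt
  have h4 : HasFDerivAt (fun w : Matrix (Fin m) (Fin n) ℝ × (Fin m → ℝ) ×
      Matrix (Fin n) (Fin m) ℝ × (Fin n → ℝ) => w.2.2.2) p4 x₀ := p4.hasFDerivAt
  have hWeY : HasFDerivAt (fun w : Matrix (Fin m) (Fin n) ℝ × (Fin m → ℝ) ×
      Matrix (Fin n) (Fin m) ℝ × (Fin n → ℝ) => w.1 * Y)
      (((McAux.mulCLM m n nt).flip Y).comp p1) x₀ :=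
    (((McAux.mulCLM m n nt).flip Y).hasFDerivAt).comp x₀ h1
  have hbeV : HasFDerivAt (fun w : Matrix (Fin m) (Fin n) ℝ × (Fin m → ℝ) ×
      Matrix (Fin n) (Fin m) ℝ × (Fin n → ℝ) => vecMulVec w.2.1 (1 : Fin nt → ℝ))
      ((McAux.vmvCLM m nt).comp p2) x₀ :=
    ((McAux.vmvCLM m nt).hasFDerivAt).comp x₀ h2
  have hφ := hWeY.add hbeV
  have hprod := McAux.hasFDerivAt_matmul h3 hφ
  have hbdV : HasFDerivAt (fun w : Matrix (Fin m) (Fin n) ℝ × (Fin m → ℝ) ×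
      Matrix (Fin n) (Fin m) ℝ × (Fin n → ℝ) => vecMulVec w.2.2.2 (1 : Fin nt → ℝ))
      ((McAux.vmvCLM n nt).comp p4) x₀ :=
    ((McAux.vmvCLM n nt).hasFDerivAt).comp x₀ h4
  have hr1 := ((hasFDerivAt_const Y x₀).sub hprod).sub hbdV
  have hr2 := ((hasFDerivAt_const P x₀).sub hWeY).sub hbeV
  have hGWe : HasFDerivAt (fun w : Matrix (Fin m) (Fin n) ℝ × (Fin m → ℝ) ×
      Matrix (Fin n) (Fin m) ℝ × (Fin n → ℝ) => G * w.1)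
      ((McAux.mulCLM n m n G).comp p1) x₀ :=
    ((McAux.mulCLM n m n G).hasFDerivAt).comp x₀ h1
  have hGWeY : HasFDerivAt (fun w : Matrix (Fin m) (Fin n) ℝ × (Fin m → ℝ) ×
      Matrix (Fin n) (Fin m) ℝ × (Fin n → ℝ) => G * w.1 * Y)
      (((McAux.mulCLM n n nt).flip Y).comp ((McAux.mulCLM n m n G).comp p1)) x₀ :=
    (((McAux.mulCLM n n nt).flip Y).hasFDerivAt).comp x₀ hGWe
  have hGbe : HasFDerivAt (fun w : Matrix (Fin m) (Fin n) ℝ × (Fin m → ℝ) ×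
      Matrix (Fin n) (Fin m) ℝ × (Fin n → ℝ) => G * vecMulVec w.2.1 (1 : Fin nt → ℝ))
      ((McAux.mulCLM n m nt G).comp ((McAux.vmvCLM m nt).comp p2)) x₀ :=
    ((McAux.mulCLM n m nt G).hasFDerivAt).comp x₀ hbeV
  have hr3 := ((hasFDerivAt_const Y x₀).sub hGWeY).sub hGbe
  have HF := (((McAux.HasFDerivAt.frobSq_comp hr1).const_mul ((1:ℝ)/2)).add
      ((McAux.HasFDerivAt.frobSq_comp hr2).const_mul (α/2))).add
      ((McAux.HasFDerivAt.frobSq_comp hr3).const_mul (β/2))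
  refine HF.congr_fderiv ?_
  refine ContinuousLinearMap.ext fun hw => ?_
  obtain ⟨hWe', hbe', hWd', hbd'⟩ := hw
  change (1 / 2) * (2 * Matrix.trace ((Y - G * (We * Y + vecMulVec be 1) - vecMulVec bd 1)ᵀ *
      (0 - (G * (hWe' * Y + vecMulVec hbe' 1) + hWd' * (We * Y + vecMulVec be 1)) -
        vecMulVec hbd' 1))) +
    (α / 2) * (2 * Matrix.trace ((P - We * Y - vecMulVec be 1)ᵀ *
      (0 - hWe' * Y - vecMulVec hbe' 1))) +
    (β / 2) * (2 * Matrix.trace ((Y - G * We * Y - G * vecMulVec be 1)ᵀ *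
      (0 - G * hWe' * Y - G * vecMulVec hbe' 1))) = 0
  rw [hR1v, hR2v, hR3v]
  simp only [Matrix.mul_add, Matrix.mul_sub, Matrix.mul_neg, Matrix.neg_mul,
    Matrix.mul_zero, Matrix.trace_add, Matrix.trace_sub, Matrix.trace_neg,
    Matrix.trace_zero]
  simp only [z1a, z1b, z2, z3, z3', z4, z5, z6]
  ring
end
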